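/- Let A be an entrywise-nonnegative d×d real matrix with ρ := ρ(A) > 0. Call indices i, j strongly connected if each is reachable from the other; the SCC of i is the set of indices strongly connected to i. Call an index i dominant if the spectral radius of the square submatrix of A obtained by restricting rows and columns to the SCC of i equals ρ, and call a dominant index i initial if every dominant index j from which i is reachable belongs to the SCC of i. If v ∈ ℝ^d is entrywise nonnegative and satisfies A v = ρ v, then for every index j with v_j ≠ 0 there exists an initial dominant index i that is reachable from j. -/

import Mathlib

open Matrix

section Aux

open Polynomial

lemma root_iff_eig {n : Type*} [Fintype n] [DecidableEq n] [Nonempty n]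
    (N : Matrix n n ℂ) (μ : ℂ) :
    N.charpoly.IsRoot μ ↔ ∃ w : n → ℂ, w ≠ 0 ∧ N.mulVec w = μ • w := by
  have heval : N.charpoly.eval μ = (Matrix.scalar n μ - N).det := by
    rw [Matrix.charpoly, ← coe_evalRingHom, RingHom.map_det]
    congr 1
    ext i j
    by_cases h : i = j
    · subst h
      simp [charmatrix_apply_eq, Matrix.scalar_apply]
    · simp [charmatrix_apply_ne _ _ _ h, Matrix.scalar_apply, Matrix.one_apply_ne h,
        Matrix.diagonal_apply_ne _ h]
  constructor
  · intro hroot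
    have hdet : (Matrix.scalar n μ - N).det = 0 := by rw [← heval]; exact hroot
    obtain ⟨w, hw, hmul⟩ := (Matrix.exists_mulVec_eq_zero_iff).2 hdet
    refine ⟨w, hw, ?_⟩
    have : (Matrix.scalar n μ).mulVec w - N.mulVec w = 0 := by
      rw [← Matrix.sub_mulVec]; exact hmul
    have h2 : (Matrix.scalar n μ).mulVec w = μ • w := by
      ext k
      simp [Matrix.scalar, Matrix.mulVec_diagonal, Pi.algebraMap_apply]
    rw [h2] at this
    exact (sub_eq_zero.mp this).symm
  · rintro ⟨w, hw, hmul⟩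
    have hdet : (Matrix.scalar n μ - N).det = 0 := by
      rw [← Matrix.exists_mulVec_eq_zero_iff]
      refine ⟨w, hw, ?_⟩
      rw [Matrix.sub_mulVec]
      have h2 : (Matrix.scalar n μ).mulVec w = μ • w := by
        ext k
        simp [Matrix.scalar, Matrix.mulVec_diagonal, Pi.algebraMap_apply]
      rw [h2, hmul, sub_self]
    rw [Polynomial.IsRoot, heval, hdet]

lemma row_bound {n : Type*} [Fintype n] [DecidableEq n]
    (M : Matrix n n ℝ) (μ : ℂ) (w : n → ℂ)
    (heig : (M.map (Complex.ofReal : ℝ → ℂ)).mulVec w = μ • w) (hM : ∀ i j, 0 ≤ M i j)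
    (k : n) :
    ‖μ‖ * ‖w k‖ ≤ ∑ l, M k l * ‖w l‖ := by
  have h1 : ‖μ‖ * ‖w k‖ = ‖(μ • w) k‖ := by
    simp [_root_.map_mul]
  rw [h1, ← heig]
  have h2 : (M.map (Complex.ofReal : ℝ → ℂ)).mulVec w k
      = ∑ l, (M k l : ℂ) * w l := by
    simp [Matrix.mulVec, dotProduct, Matrix.map_apply]
  rw [h2]
  refine le_trans (norm_sum_le _ _) (le_of_eq ?_)
  refine Finset.sum_congr rfl fun l _ => ?_
  rw [norm_mul, Complex.norm_real, Real.norm_eq_abs, abs_of_nonneg (hM k l)]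

lemma exists_max_ratio {n : Type*} [Fintype n] [DecidableEq n] [Nonempty n]
    (u : n → ℝ) (hu : ∀ i, 0 < u i) (w : n → ℂ) (hw : w ≠ 0) :
    ∃ c : ℝ, 0 < c ∧ (∀ k, ‖w k‖ ≤ c * u k) ∧
      ∃ i0, ‖w i0‖ = c * u i0 := by
  obtain ⟨i0, -, hmax⟩ := Finset.exists_max_image Finset.univ
    (fun i => ‖w i‖ / u i) ⟨Classical.arbitrary n, Finset.mem_univ _⟩
  refine ⟨‖w i0‖ / u i0, ?_, ?_, i0, ?_⟩
  · obtain ⟨k, hk⟩ := Function.ne_iff.mp hw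
    have : 0 < ‖w k‖ / u k :=
      div_pos (by simpa using hk) (hu k)
    exact lt_of_lt_of_le this (hmax k (Finset.mem_univ k))
  · intro k
    exact (div_le_iff₀ (hu k)).mp (hmax k (Finset.mem_univ k))
  · exact (div_mul_cancel₀ _ (hu i0).ne').symm

lemma eig_bound {n : Type*} [Fintype n] [DecidableEq n] [Nonempty n]
    (M : Matrix n n ℝ) (hM : ∀ i j, 0 ≤ M i j)
    (u : n → ℝ) (hu : ∀ i, 0 < u i) (r : ℝ)
    (hMu : ∀ i, M.mulVec u i ≤ r * u i)
    (μ : ℂ) (w : n → ℂ) (hw : w ≠ 0)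
    (heig : (M.map (Complex.ofReal : ℝ → ℂ)).mulVec w = μ • w) :
    ‖μ‖ ≤ r := by
  obtain ⟨c, hc0, hcw, i0, hwi0⟩ := exists_max_ratio u hu w hw
  have h1 : ‖μ‖ * ‖w i0‖ ≤ c * (r * u i0) := by
    refine le_trans (row_bound M μ w heig hM i0) ?_
    have h2 : ∑ l, M i0 l * ‖w l‖ ≤ c * M.mulVec u i0 := by
      rw [Matrix.mulVec, dotProduct, Finset.mul_sum]
      refine Finset.sum_le_sum fun l _ => ?_
      calc M i0 l * ‖w l‖ ≤ M i0 l * (c * u l) :=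
            mul_le_mul_of_nonneg_left (hcw l) (hM i0 l)
        _ = c * (M i0 l * u l) := by ring
    exact le_trans h2 (mul_le_mul_of_nonneg_left (hMu i0) (le_of_lt hc0))
  rw [hwi0] at h1
  have hpos : 0 < c * u i0 := mul_pos hc0 (hu i0)
  nlinarith [h1, hpos]

lemma eig_strict {n : Type*} [Fintype n] [DecidableEq n] [Nonempty n]
    (M : Matrix n n ℝ) (hM : ∀ i j, 0 ≤ M i j)
    (u : n → ℝ) (hu : ∀ i, 0 < u i) (r : ℝ)
    (hMu : ∀ i, M.mulVec u i ≤ r * u i)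
    (i1 : n) (hst : M.mulVec u i1 < r * u i1)
    (hconn : ∀ a : n, Relation.ReflTransGen (fun p q : n => 0 < M p q) a i1)
    (μ : ℂ) (w : n → ℂ) (hw : w ≠ 0)
    (heig : (M.map (Complex.ofReal : ℝ → ℂ)).mulVec w = μ • w)
    (habs : ‖μ‖ = r) : False := by
  obtain ⟨c, hc0, hcw, i0, hwi0⟩ := exists_max_ratio u hu w hw
  have hkey : ∀ k, ‖w k‖ = c * u k →
      (M.mulVec u k = r * u k ∧ ∀ l, 0 < M k l → ‖w l‖ = c * u l) := by
    intro k hk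
    have hterm : ∀ l ∈ Finset.univ, M k l * ‖w l‖ ≤ M k l * (c * u l) :=
      fun l _ => mul_le_mul_of_nonneg_left (hcw l) (hM k l)
    have hs1 : ‖μ‖ * ‖w k‖ ≤ ∑ l, M k l * ‖w l‖ :=
      row_bound M μ w heig hM k
    have hs2 : ∑ l, M k l * ‖w l‖ ≤ ∑ l, M k l * (c * u l) :=
      Finset.sum_le_sum hterm
    have hs3 : ∑ l, M k l * (c * u l) = c * M.mulVec u k := by
      rw [Matrix.mulVec, dotProduct, Finset.mul_sum]
      exact Finset.sum_congr rfl fun l _ => by ring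
    have hs4 : c * M.mulVec u k ≤ c * (r * u k) :=
      mul_le_mul_of_nonneg_left (hMu k) (le_of_lt hc0)
    have hlow : ‖μ‖ * ‖w k‖ = c * (r * u k) := by
      rw [habs, hk]; ring
    have he2 : ∑ l, M k l * ‖w l‖ = ∑ l, M k l * (c * u l) := by
      refine le_antisymm hs2 ?_
      rw [hs3]
      calc c * M.mulVec u k ≤ c * (r * u k) := hs4
        _ = ‖μ‖ * ‖w k‖ := hlow.symm
        _ ≤ _ := hs1
    have he4 : c * M.mulVec u k = c * (r * u k) := by
      refine le_antisymm hs4 ?_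
      rw [← hs3, ← he2]
      calc c * (r * u k) = ‖μ‖ * ‖w k‖ := hlow.symm
        _ ≤ _ := hs1
    constructor
    · exact mul_left_cancel₀ (ne_of_gt hc0) he4
    · intro l hl
      have := (Finset.sum_eq_sum_iff_of_le hterm).mp he2 l (Finset.mem_univ l)
      exact mul_left_cancel₀ (ne_of_gt hl) this
  have hprop : ∀ a b : n, Relation.ReflTransGen (fun p q : n => 0 < M p q) a b →
      ‖w a‖ = c * u a → ‖w b‖ = c * u b := by
    intro a b hab
    induction hab with
    | refl => exact id
    | tail _ hbc ih => intro ha; exact (hkey _ (ih ha)).2 _ hbc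
  have hi1 : ‖w i1‖ = c * u i1 := hprop i0 i1 (hconn i0) hwi0
  exact absurd (hkey i1 hi1).1 (ne_of_lt hst)

end Aux

/-- The spectral radius of a real square matrix: the maximum of `|μ|` over the complex
eigenvalues `μ` (roots of the characteristic polynomial over `ℂ`). -/
noncomputable def specRad {n : Type*} [Fintype n] [DecidableEq n] (M : Matrix n n ℝ) : ℝ :=
  sSup {r : ℝ | ∃ μ : ℂ, (M.map Complex.ofReal).charpoly.IsRoot μ ∧ r = ‖μ‖}

section Aux2

open Polynomial

lemma specRad_eq_of_posEig {n : Type*} [Fintype n] [DecidableEq n] [Nonempty n]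
    (M : Matrix n n ℝ) (hM : ∀ i j, 0 ≤ M i j)
    (u : n → ℝ) (hu : ∀ i, 0 < u i) (r : ℝ) (hr : 0 ≤ r)
    (heq : M.mulVec u = r • u) : specRad M = r := by
  set S := {x : ℝ | ∃ μ : ℂ, (M.map Complex.ofReal).charpoly.IsRoot μ ∧ x = ‖μ‖}
    with hS
  have hmem : r ∈ S := by
    refine ⟨(r : ℂ), ?_, by rw [Complex.norm_real, Real.norm_eq_abs, abs_of_nonneg hr]⟩
    rw [root_iff_eig]
    refine ⟨fun i => (u i : ℂ), ?_, ?_⟩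
    · intro h
      have := congrFun h (Classical.arbitrary n)
      simp only [Pi.zero_apply, Complex.ofReal_eq_zero] at this
      exact (hu _).ne' this
    · ext i
      have h1 := RingHom.map_mulVec Complex.ofRealHom M u i
      simp only [Complex.ofRealHom_eq_coe] at h1
      have : (M.map (Complex.ofReal : ℝ → ℂ)).mulVec (fun i => (u i : ℂ)) i
          = ((M.mulVec u i : ℝ) : ℂ) := by
        rw [h1]; rfl
      rw [this, heq]
      simp [Complex.ofReal_mul]
  have hub : ∀ x ∈ S, x ≤ r := by
    rintro x ⟨μ, hroot, rfl⟩
    obtain ⟨w, hw, heigw⟩ := (root_iff_eig _ _).mp hroot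
    exact eig_bound M hM u hu r (fun i => by rw [heq]; exact le_of_eq rfl) μ w hw heigw
  exact le_antisymm (csSup_le ⟨r, hmem⟩ hub) (le_csSup ⟨r, fun x hx => hub x hx⟩ hmem)

lemma specRad_mem {n : Type*} [Fintype n] [DecidableEq n] [Nonempty n]
    (M : Matrix n n ℝ) :
    ∃ μ : ℂ, (M.map Complex.ofReal).charpoly.IsRoot μ ∧ specRad M = ‖μ‖ := by
  set p := (M.map Complex.ofReal).charpoly with hp
  have hpne : p ≠ 0 := (M.map Complex.ofReal).charpoly_monic.ne_zero
  have hfin : {μ : ℂ | p.IsRoot μ}.Finite := Polynomial.finite_setOf_isRoot hpne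
  have hSfin : {r : ℝ | ∃ μ : ℂ, p.IsRoot μ ∧ r = ‖μ‖}.Finite := by
    have : {r : ℝ | ∃ μ : ℂ, p.IsRoot μ ∧ r = ‖μ‖}
        = (fun μ : ℂ => ‖μ‖) '' {μ : ℂ | p.IsRoot μ} := by
      ext x; constructor
      · rintro ⟨μ, h1, rfl⟩; exact ⟨μ, h1, rfl⟩
      · rintro ⟨μ, h1, rfl⟩; exact ⟨μ, h1, rfl⟩
    rw [this]; exact hfin.image _
  have hdeg : 0 < p.degree := by
    rw [hp, Matrix.charpoly_degree_eq_dim]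
    exact_mod_cast Fintype.card_pos
  obtain ⟨z, hz⟩ := Complex.exists_root hdeg
  have hne : {r : ℝ | ∃ μ : ℂ, p.IsRoot μ ∧ r = ‖μ‖}.Nonempty :=
    ⟨‖z‖, z, hz, rfl⟩
  obtain ⟨μ, h1, h2⟩ := hne.csSup_mem hSfin
  exact ⟨μ, h1, h2⟩

end Aux2

/-- `t` is reachable from `s` in the directed graph of the nonnegative matrix `A`
(edges where the entry is positive). -/
def Reach {d : ℕ} (A : Matrix (Fin d) (Fin d) ℝ) (s t : Fin d) : Prop :=
  Relation.ReflTransGen (fun p q => 0 < A p q) s t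

/-- `i` and `j` are strongly connected: each is reachable from the other. -/
def SameSCC {d : ℕ} (A : Matrix (Fin d) (Fin d) ℝ) (i j : Fin d) : Prop :=
  Reach A i j ∧ Reach A j i

open Classical in
/-- `i` is a dominant index: the spectral radius of the submatrix of `A` obtained by
restricting rows and columns to the strongly connected component of `i` equals `ρ(A)`. -/
def Dominant {d : ℕ} (A : Matrix (Fin d) (Fin d) ℝ) (i : Fin d) : Prop :=
  specRad (A.submatrix (Subtype.val : {j // SameSCC A i j} → Fin d) Subtype.val) = specRad A

/-- `i` is an initial dominant index: it is dominant, and every dominant index `j` from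
which `i` is reachable lies in the strongly connected component of `i`. -/
def InitialDominant {d : ℕ} (A : Matrix (Fin d) (Fin d) ℝ) (i : Fin d) : Prop :=
  Dominant A i ∧ ∀ j : Fin d, Dominant A j → Reach A j i → SameSCC A i j

section Aux3

/-- lifting a path between two members of an SCC to a path inside the SCC subtype -/
lemma lift_path {d : ℕ} (A : Matrix (Fin d) (Fin d) ℝ) (j0 : Fin d)
    (a b : {x // SameSCC A j0 x}) :
    Relation.ReflTransGen (fun p q : {x // SameSCC A j0 x} => 0 < A p.val q.val) a b := by
  obtain ⟨a, ha⟩ := a; obtain ⟨b, hb⟩ := b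
  have hab : Relation.ReflTransGen (fun p q => 0 < A p q) a b :=
    Relation.ReflTransGen.trans ha.2 hb.1
  have key : ∀ x (hx : Relation.ReflTransGen (fun p q => 0 < A p q) x b)
      (hjx : Relation.ReflTransGen (fun p q => 0 < A p q) j0 x),
      Relation.ReflTransGen (fun p q : {x // SameSCC A j0 x} => 0 < A p.val q.val)
        ⟨x, ⟨hjx, Relation.ReflTransGen.trans hx hb.2⟩⟩ ⟨b, hb⟩ := by
    intro x hx
    induction hx using Relation.ReflTransGen.head_induction_on with
    | refl => intro hjx; exact Relation.ReflTransGen.refl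
    | head hedge htail ih =>
        intro hjx
        exact Relation.ReflTransGen.head hedge (ih (Relation.ReflTransGen.tail hjx hedge))
  exact key a hab ha.1

end Aux3

/-- a nonnegative eigenvector of a nonnegative matrix `A` for the eigenvalue
`ρ = ρ(A) > 0` is supported on the backward closure of the initial dominant components. -/
theorem stmt14 {d : ℕ} (A : Matrix (Fin d) (Fin d) ℝ)
    (hA : ∀ s t, 0 ≤ A s t)
    (ρ : ℝ) (hρ : ρ = specRad A) (hρpos : 0 < ρ)
    (v : Fin d → ℝ) (hv : ∀ i, 0 ≤ v i)
    (heig : A.mulVec v = ρ • v) :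
    ∀ j : Fin d, v j ≠ 0 → ∃ i : Fin d, InitialDominant A i ∧ Reach A j i := by
  classical
  intro j hj
  -- positivity of entries of v on its support
  have hvpos : ∀ i, v i ≠ 0 → 0 < v i := fun i h => lt_of_le_of_ne (hv i) (Ne.symm h)
  have hrow : ∀ i, ∑ k, A i k * v k = ρ * v i := by
    intro i
    have := congrFun heig i
    simpa [Matrix.mulVec, dotProduct] using this
  -- zero set is forward closed
  have hzero1 : ∀ s t, 0 < A s t → v s = 0 → v t = 0 := by
    intro s t hst hs
    have hsum : ∑ k, A s k * v k = 0 := by rw [hrow s, hs, mul_zero]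
    have hterm := (Finset.sum_eq_zero_iff_of_nonneg
      (fun k _ => mul_nonneg (hA s k) (hv k))).mp hsum t (Finset.mem_univ t)
    rcases mul_eq_zero.mp hterm with h | h
    · exact absurd h (ne_of_gt hst)
    · exact h
  have hzero : ∀ s t, Reach A s t → v s = 0 → v t = 0 := by
    intro s t hst
    induction hst with
    | refl => exact id
    | tail _ he ih => intro hs; exact hzero1 _ _ he (ih hs)
  have hback : ∀ s t, Reach A s t → v t ≠ 0 → v s ≠ 0 :=
    fun s t hst ht hs => ht (hzero s t hst hs)
  -- choose a minimal (final) strongly connected class inside the support, reachable from j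
  set nc : Fin d → ℕ :=
    fun i => (Finset.univ.filter (fun k => v k ≠ 0 ∧ Reach A i k)).card with hnc
  obtain ⟨i, hiT, hmin⟩ := Finset.exists_min_image
    (Finset.univ.filter (fun i => v i ≠ 0 ∧ Reach A j i)) nc
    ⟨j, by simp [hj]; exact Relation.ReflTransGen.refl⟩
  rw [Finset.mem_filter] at hiT
  obtain ⟨-, hvi, hji⟩ := hiT
  have hfinal : ∀ k, v k ≠ 0 → Reach A i k → Reach A k i := by
    intro k hvk hik
    by_contra hnk
    have hsub : Finset.univ.filter (fun m => v m ≠ 0 ∧ Reach A k m) ⊂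
        Finset.univ.filter (fun m => v m ≠ 0 ∧ Reach A i m) := by
      constructor
      · intro m hm
        rw [Finset.mem_filter] at hm ⊢
        exact ⟨hm.1, hm.2.1, Relation.ReflTransGen.trans hik hm.2.2⟩
      · intro hsub'
        have : i ∈ Finset.univ.filter (fun m => v m ≠ 0 ∧ Reach A k m) := by
          apply hsub'
          rw [Finset.mem_filter]
          exact ⟨Finset.mem_univ i, hvi, Relation.ReflTransGen.refl⟩
        rw [Finset.mem_filter] at this
        exact hnk this.2.2
    have hlt : nc k < nc i := Finset.card_lt_card hsub
    have hk : k ∈ Finset.univ.filter (fun i => v i ≠ 0 ∧ Reach A j i) := by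
      rw [Finset.mem_filter]
      exact ⟨Finset.mem_univ k, hvk, Relation.ReflTransGen.trans hji hik⟩
    exact absurd (hmin k hk) (not_le.mpr hlt)
  refine ⟨i, ⟨?_, ?_⟩, hji⟩
  -- i is dominant
  · have hCine : Nonempty {k // SameSCC A i k} :=
      ⟨⟨i, Relation.ReflTransGen.refl, Relation.ReflTransGen.refl⟩⟩
    have hCipos : ∀ k : {k // SameSCC A i k}, 0 < v k.val :=
      fun k => hvpos _ (hback _ _ k.2.2 hvi)
    unfold Dominant
    rw [← hρ]
    refine specRad_eq_of_posEig _ (fun a b => hA _ _) (fun k => v k.val) hCipos ρ hρpos.le ?_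
    ext k
    have hsplit : ∑ m ∈ Finset.univ.filter (fun m => SameSCC A i m), A k.val m * v m
        = ∑ m, A k.val m * v m := by
      refine Finset.sum_filter_of_ne ?_
      intro m _ hm
      by_contra hnm
      have hAkm : 0 < A k.val m := by
        rcases (hA k.val m).lt_or_eq with h | h
        · exact h
        · exact absurd (by rw [← h, zero_mul]) hm
      have hvm : v m ≠ 0 := by
        intro h0
        exact hm (by rw [h0, mul_zero])
      have him : Reach A i m :=
        Relation.ReflTransGen.tail k.2.1 hAkm
      exact hnm ⟨him, hfinal m hvm him⟩
    have hsubty : ∑ m ∈ Finset.univ.filter (fun m => SameSCC A i m), A k.val m * v m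
        = ∑ m : {k // SameSCC A i k}, A k.val m.val * v m.val := by
      exact Finset.sum_subtype (p := fun m => SameSCC A i m) (Finset.univ.filter (fun m => SameSCC A i m)) (fun m => by simp) (fun m => A k.val m * v m)
    show (∑ m : {k // SameSCC A i k}, A k.val m.val * v m.val) = ρ * v k.val
    rw [← hsubty, hsplit]
    exact hrow k.val
  -- i is initial
  · intro j' hdom' hreach'
    by_contra hnot
    have hvj' : v j' ≠ 0 := hback j' i hreach' hvi
    have hCne : Nonempty {k // SameSCC A j' k} :=
      ⟨⟨j', Relation.ReflTransGen.refl, Relation.ReflTransGen.refl⟩⟩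
    set M := A.submatrix (Subtype.val : {k // SameSCC A j' k} → Fin d)
      (Subtype.val : {k // SameSCC A j' k} → Fin d) with hM
    have hCpos : ∀ k : {k // SameSCC A j' k}, 0 < v k.val :=
      fun k => hvpos _ (hback _ _ (Relation.ReflTransGen.trans k.2.2 hreach') hvi)
    -- formula for rows of M
    have hMrow : ∀ k : {k // SameSCC A j' k}, M.mulVec (fun l => v l.val) k
        = ∑ m ∈ Finset.univ.filter (fun m => SameSCC A j' m), A k.val m * v m := by
      intro k
      have hsubty : ∑ m ∈ Finset.univ.filter (fun m => SameSCC A j' m), A k.val m * v m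
          = ∑ m : {k // SameSCC A j' k}, A k.val m.val * v m.val :=
        Finset.sum_subtype (p := fun m => SameSCC A j' m) (Finset.univ.filter (fun m => SameSCC A j' m)) (fun m => by simp) (fun m => A k.val m * v m)
      rw [hsubty]
      simp [hM, Matrix.mulVec, dotProduct, Matrix.submatrix_apply]
    -- weak inequality on every row
    have hle : ∀ k : {k // SameSCC A j' k},
        M.mulVec (fun l => v l.val) k ≤ ρ * v k.val := by
      intro k
      rw [hMrow k, ← hrow k.val]
      refine Finset.sum_le_sum_of_subset_of_nonneg (Finset.filter_subset _ _)
        (fun m _ _ => mul_nonneg (hA _ _) (hv m))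
    -- find a strict row: an edge leaving the class of j' inside the support
    have hexit : ∃ k1 l1, SameSCC A j' k1 ∧ ¬ SameSCC A j' l1 ∧ 0 < A k1 l1 ∧ v l1 ≠ 0 := by
      have key : ∀ x (hx : Relation.ReflTransGen (fun p q => 0 < A p q) x i),
          SameSCC A j' x →
          ∃ k1 l1, SameSCC A j' k1 ∧ ¬ SameSCC A j' l1 ∧ 0 < A k1 l1 ∧ v l1 ≠ 0 := by
        intro x hx
        induction hx using Relation.ReflTransGen.head_induction_on with
        | refl =>
            intro hSCC
            exact absurd ⟨hSCC.2, hSCC.1⟩ hnot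
        | @head a c hedge htail ih =>
            intro hSCC
            by_cases hc : SameSCC A j' c
            · exact ih hc
            · exact ⟨a, c, hSCC, hc, hedge, hback c i htail hvi⟩
      exact key j' hreach'
        ⟨Relation.ReflTransGen.refl, Relation.ReflTransGen.refl⟩
    obtain ⟨k1, l1, hk1, hl1, hedge, hvl1⟩ := hexit
    -- the strict inequality at the row k1
    have hst : M.mulVec (fun l => v l.val) ⟨k1, hk1⟩ < ρ * v k1 := by
      rw [hMrow ⟨k1, hk1⟩, ← hrow k1]
      have hsub : Finset.univ.filter (fun m => SameSCC A j' m) ⊆ Finset.univ.erase l1 := by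
        intro m hm
        rw [Finset.mem_filter] at hm
        refine Finset.mem_erase.mpr ⟨?_, Finset.mem_univ m⟩
        intro h; exact hl1 (h ▸ hm.2)
      calc ∑ m ∈ Finset.univ.filter (fun m => SameSCC A j' m), A k1 m * v m
          ≤ ∑ m ∈ Finset.univ.erase l1, A k1 m * v m :=
            Finset.sum_le_sum_of_subset_of_nonneg hsub
              (fun m _ _ => mul_nonneg (hA _ _) (hv m))
        _ < ∑ m, A k1 m * v m := by
            rw [← Finset.sum_erase_add _ _ (Finset.mem_univ l1)]
            have : 0 < A k1 l1 * v l1 := mul_pos hedge (hvpos l1 hvl1)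
            linarith
    -- connectivity of the class
    have hconn : ∀ a : {k // SameSCC A j' k},
        Relation.ReflTransGen (fun p q : {k // SameSCC A j' k} => 0 < M p q)
          a ⟨k1, hk1⟩ := fun a => lift_path A j' a ⟨k1, hk1⟩
    -- the dominant class has an eigenvalue of modulus ρ; contradiction
    have hdomM : specRad M = ρ := by
      have := hdom'
      unfold Dominant at this
      rw [← hρ] at this
      exact this
    obtain ⟨μ, hroot, hμ⟩ := specRad_mem M
    obtain ⟨w, hw, heigw⟩ := (root_iff_eig _ _).mp hroot
    exact eig_strict M (fun a b => hA _ _) (fun k => v k.val) hCpos ρ hle ⟨k1, hk1⟩ hst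
      hconn μ w hw heigw (by rw [← hμ, hdomM])
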